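/- For every k ≥ 2 and n ≥ 0, the expected decompressed size of a uniformly random k-ary chain with n internal nodes equals Σ_{ℓ=1}^{n} ((k-1)^{ℓ-1}/ℓ!) · C(n,ℓ). -/

import Mathlib

/-- The number of internal nodes of the decompressed tree of the k-ary chain encoded by
the pointer table t, truncated at node i: s_0 = 0 (the sink decompresses to a leaf) and
s_{i+1} = 1 + s_i + Σ_{j=1}^{k-1} s_{t(i,j)}, where t i j is the target of the (j+1)-st
pointer of node i+1. (The `min` is only a termination guard, the identity under the
hypothesis t i j ≤ i.) -/
def karySize (k : ℕ) (t : ℕ → ℕ → ℕ) : ℕ → ℕ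
  | 0 => 0
  | (i + 1) => 1 + karySize k t i + ∑ j ∈ Finset.range (k - 1), karySize k t (min (t i j) i)
termination_by i => i
decreasing_by
  · omega
  · omega

open Finset

namespace Stmt13aux


noncomputable def A (c : ℚ) (n : ℕ) : ℚ :=
  ∑ ℓ ∈ Finset.Icc 1 n, c ^ (ℓ - 1) / ℓ.factorial * (n.choose ℓ : ℚ)

lemma A_zero (c : ℚ) : A c 0 = 0 := by simp [A]

lemma sum_choose_range (n ℓ : ℕ) :
    ∑ m ∈ range (n + 1), (m.choose ℓ : ℚ) = ((n + 1).choose (ℓ + 1) : ℚ) := by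
  rw [← Nat.cast_sum]
  congr 1
  rw [← Nat.sum_Icc_choose n ℓ]
  apply (Finset.sum_subset ?_ ?_).symm
  · intro m hm; simp only [mem_Icc] at hm; simp; omega
  · intro m hm hm2; simp only [mem_Icc, mem_range] at hm hm2
    exact Nat.choose_eq_zero_of_lt (by omega)

lemma A_succ (c : ℚ) (n : ℕ) :
    A c (n + 1) = 1 + A c n + c * (∑ m ∈ range (n + 1), A c m) / (n + 1) := by
  have key : ∑ m ∈ range (n + 1), A c m
      = ∑ ℓ ∈ Icc 1 n, c ^ (ℓ - 1) / ℓ.factorial * ((n + 1).choose (ℓ + 1) : ℚ) := by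
    unfold A
    have h1 : ∀ m ∈ range (n + 1),
        ∑ ℓ ∈ Icc 1 m, c ^ (ℓ - 1) / ℓ.factorial * (m.choose ℓ : ℚ)
        = ∑ ℓ ∈ Icc 1 n, c ^ (ℓ - 1) / ℓ.factorial * (m.choose ℓ : ℚ) := by
      intro m hm
      apply Finset.sum_subset
      · apply Finset.Icc_subset_Icc_right; simp at hm; omega
      · intro ℓ h1 h2
        simp only [mem_Icc] at h1 h2
        rw [Nat.choose_eq_zero_of_lt (by omega)]
        simp
    rw [Finset.sum_congr rfl h1, Finset.sum_comm]
    refine Finset.sum_congr rfl fun ℓ _ => ?_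
    rw [← Finset.mul_sum, sum_choose_range]
  have hIcc : ∀ (f : ℕ → ℚ) (m : ℕ), ∑ ℓ ∈ Icc 1 m, f ℓ = ∑ i ∈ range m, f (1 + i) := by
    intro f m
    rw [← Finset.Ico_add_one_right_eq_Icc, Finset.sum_Ico_eq_sum_range]
    simp
  rw [key, A, A, hIcc, hIcc, hIcc]
  have hterm : ∀ i : ℕ, c * (c ^ (1 + i - 1) / (1 + i).factorial * ((n + 1).choose (1 + i + 1) : ℚ)) / (n + 1)
      = c ^ (i + 1) / (i + 2).factorial * ((n.choose (i + 1) : ℚ)) := by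
    intro i
    have hnat : (n + 1) * n.choose (i + 1) = (n + 1).choose (i + 1 + 1) * (i + 1 + 1) :=
      Nat.add_one_mul_choose_eq n (i + 1)
    have hq : ((n:ℚ) + 1) * n.choose (i + 1) = ((n + 1).choose (i + 2) : ℚ) * (i + 2) := by
      exact_mod_cast hnat
    have h1 : (1 : ℕ) + i + 1 = i + 2 := by omega
    have h2 : (1 : ℕ) + i - 1 = i := by omega
    rw [h1, h2]
    rw [show (1 + i).factorial = (i + 1).factorial by ring_nf,
      show (i + 2).factorial = (i + 2) * (i + 1).factorial from Nat.factorial_succ (i + 1)]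
    have hf : ((i + 1).factorial : ℚ) ≠ 0 := by exact_mod_cast (Nat.factorial_pos _).ne'
    have hn1 : ((n : ℚ) + 1) ≠ 0 := by positivity
    have hi2 : ((i : ℚ) + 2) ≠ 0 := by positivity
    field_simp
    ring_nf
    ring_nf at hq
    push_cast at hq ⊢
    linear_combination (-(c * c ^ i * ((1 + i).factorial : ℚ))) * hq
  rw [Finset.mul_sum, Finset.sum_div]
  rw [Finset.sum_congr rfl (fun i _ => hterm i)]
  have hpas : ∀ i : ℕ, ((n + 1).choose (1 + i) : ℚ) = (n.choose i : ℚ) + (n.choose (1 + i) : ℚ) := by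
    intro i
    rw [show 1 + i = i + 1 by omega]
    exact_mod_cast Nat.choose_succ_succ' n i
  calc ∑ i ∈ range (n + 1), c ^ (1 + i - 1) / ((1 + i).factorial : ℚ) * ((n + 1).choose (1 + i) : ℚ)
      = ∑ i ∈ range (n + 1), (c ^ (1 + i - 1) / ((1 + i).factorial : ℚ) * (n.choose i : ℚ)
        + c ^ (1 + i - 1) / ((1 + i).factorial : ℚ) * (n.choose (1 + i) : ℚ)) := by
        refine Finset.sum_congr rfl fun i _ => ?_; rw [hpas i]; ring
    _ = (∑ i ∈ range (n + 1), c ^ (1 + i - 1) / ((1 + i).factorial : ℚ) * (n.choose i : ℚ))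
        + ∑ i ∈ range (n + 1), c ^ (1 + i - 1) / ((1 + i).factorial : ℚ) * (n.choose (1 + i) : ℚ) :=
        Finset.sum_add_distrib
    _ = 1 + (∑ i ∈ range n, c ^ (1 + i - 1) / ((1 + i).factorial : ℚ) * (n.choose (1 + i) : ℚ))
        + ∑ i ∈ range n, c ^ (i + 1) / ((i + 2).factorial : ℚ) * (n.choose (i + 1) : ℚ) := by
        rw [Finset.sum_range_succ' (fun i => c ^ (1 + i - 1) / ((1 + i).factorial : ℚ) * (n.choose i : ℚ)) n]
        rw [Finset.sum_range_succ (fun i => c ^ (1 + i - 1) / ((1 + i).factorial : ℚ) * (n.choose (1 + i) : ℚ)) n]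
        rw [Nat.choose_eq_zero_of_lt (by omega : n < 1 + n)]
        have : ∀ i : ℕ, c ^ (1 + (i + 1) - 1) / ((1 + (i + 1)).factorial : ℚ) * (n.choose (i + 1) : ℚ)
            = c ^ (i + 1) / ((i + 2).factorial : ℚ) * (n.choose (i + 1) : ℚ) := by
          intro i
          have e1 : 1 + (i + 1) = i + 2 := by omega
          rw [e1]
          norm_num
        rw [Finset.sum_congr rfl (fun i _ => this i)]
        norm_num
        ring



lemma karySize_congr (k : ℕ) (g g' : ℕ → ℕ → ℕ) :
    ∀ m : ℕ, (∀ i, i < m → ∀ j, g i j = g' i j) → karySize k g m = karySize k g' m := by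
  intro m
  induction m using Nat.strong_induction_on with
  | _ m ih =>
    intro h
    cases m with
    | zero => rw [karySize, karySize]
    | succ i =>
      rw [karySize, karySize]
      congr 1
      · congr 1
        exact ih i (by omega) (fun i' hi' j => h i' (by omega) j)
      · refine Finset.sum_congr rfl fun j _ => ?_
        rw [h i (by omega) j]
        exact ih (min (g' i j) i) (by omega) (fun i' hi' j' => h i' (by omega) j')

variable (k n : ℕ)

def V : Finset (Fin n → Fin (k - 1) → Fin (n + 1)) :=
  (Finset.univ).filter (fun t => ∀ (i : Fin n) (j : Fin (k - 1)), (t i j : ℕ) ≤ (i : ℕ))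

def ext (t : Fin n → Fin (k - 1) → Fin (n + 1)) : ℕ → ℕ → ℕ :=
  fun i j => if h : i < n ∧ j < k - 1 then (t ⟨i, h.1⟩ ⟨j, h.2⟩ : ℕ) else 0

noncomputable def S (m : ℕ) : ℚ := ∑ t ∈ V k n, (karySize k (ext k n t) m : ℚ)

lemma card_V : (V k n).card = n.factorial ^ (k - 1) := by
  have h1 : (V k n).card = Fintype.card
      {t : Fin n → Fin (k - 1) → Fin (n + 1) // ∀ i j, (t i j : ℕ) ≤ (i : ℕ)} := by
    rw [Fintype.card_subtype]
    unfold V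
    congr 1
  have e : {t : Fin n → Fin (k - 1) → Fin (n + 1) // ∀ i j, (t i j : ℕ) ≤ (i : ℕ)}
      ≃ (∀ i : Fin n, Fin (k - 1) → Fin ((i : ℕ) + 1)) :=
    { toFun := fun t i j => ⟨(t.1 i j : ℕ), Nat.lt_succ_of_le (t.2 i j)⟩
      invFun := fun f => ⟨fun i j => Fin.castLE (Nat.succ_le_succ (Nat.le_of_lt i.isLt)) (f i j),
        fun i j => Nat.lt_succ_iff.mp (f i j).isLt⟩
      left_inv := fun t => rfl
      right_inv := fun f => rfl }
  rw [h1, Fintype.card_congr e, Fintype.card_pi]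
  simp only [Fintype.card_fun, Fintype.card_fin]
  rw [Finset.prod_pow]
  congr 1
  rw [Fin.prod_univ_eq_prod_range (fun i => i + 1) n]
  exact Finset.prod_range_add_one_eq_factorial n

lemma mem_V {t : Fin n → Fin (k - 1) → Fin (n + 1)} :
    t ∈ V k n ↔ ∀ (i : Fin n) (j : Fin (k - 1)), (t i j : ℕ) ≤ (i : ℕ) := by
  simp [V]

/-- updating one coordinate at row x keeps membership in V provided new value ≤ x -/
lemma update_mem_V {t : Fin n → Fin (k - 1) → Fin (n + 1)} (ht : t ∈ V k n)
    (x : Fin n) (y : Fin (k - 1)) (v : Fin (n + 1)) (hv : (v : ℕ) ≤ (x : ℕ)) :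
    Function.update t x (Function.update (t x) y v) ∈ V k n := by
  rw [mem_V] at ht ⊢
  intro i j
  rcases eq_or_ne i x with rfl | hix
  · rw [Function.update_self]
    rcases eq_or_ne j y with rfl | hjy
    · rwa [Function.update_self]
    · rw [Function.update_of_ne hjy]; exact ht i j
  · rw [Function.update_of_ne hix]; exact ht i j

/-- karySize (ext t) m doesn't depend on coordinates at rows ≥ m -/
lemma karySize_update (t : Fin n → Fin (k - 1) → Fin (n + 1))
    (x : Fin n) (y : Fin (k - 1)) (v : Fin (n + 1)) (m : ℕ) (hm : m ≤ (x : ℕ)) :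
    karySize k (ext k n (Function.update t x (Function.update (t x) y v))) m
      = karySize k (ext k n t) m := by
  apply karySize_congr
  intro i hi j
  unfold ext
  rcases Nat.lt_or_ge i n with hin | hin
  · rcases Nat.lt_or_ge j (k - 1) with hjk | hjk
    · rw [dif_pos ⟨hin, hjk⟩, dif_pos ⟨hin, hjk⟩]
      have hne : (⟨i, hin⟩ : Fin n) ≠ x := by
        intro hcontra
        apply_fun (Fin.val) at hcontra
        simp at hcontra
        omega
      rw [Function.update_of_ne hne]
    · rw [dif_neg (by omega), dif_neg (by omega)]
  · rw [dif_neg (by omega), dif_neg (by omega)]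

/-- fiber sums are all equal -/
lemma fiber_const (x : Fin n) (y : Fin (k - 1)) (m : ℕ) (hm : m ≤ (x : ℕ))
    (a b : Fin (n + 1)) (ha : (a : ℕ) ≤ (x : ℕ)) (hb : (b : ℕ) ≤ (x : ℕ)) :
    ∑ t ∈ (V k n).filter (fun t => t x y = a), (karySize k (ext k n t) m : ℚ)
    = ∑ t ∈ (V k n).filter (fun t => t x y = b), (karySize k (ext k n t) m : ℚ) := by
  apply Finset.sum_nbij'
    (i := fun t => Function.update t x (Function.update (t x) y b))
    (j := fun t => Function.update t x (Function.update (t x) y a))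
  · intro t ht
    rw [Finset.mem_filter] at ht ⊢
    refine ⟨update_mem_V k n ht.1 x y b hb, ?_⟩
    rw [Function.update_self, Function.update_self]
  · intro t ht
    rw [Finset.mem_filter] at ht ⊢
    refine ⟨update_mem_V k n ht.1 x y a ha, ?_⟩
    rw [Function.update_self, Function.update_self]
  · intro t ht
    rw [Finset.mem_filter] at ht
    rw [Function.update_idem, Function.update_self, Function.update_idem]
    conv_lhs => rw [← ht.2]
    rw [Function.update_eq_self, Function.update_eq_self]
  · intro t ht
    rw [Finset.mem_filter] at ht
    rw [Function.update_idem, Function.update_self, Function.update_idem]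
    conv_lhs => rw [← ht.2]
    rw [Function.update_eq_self, Function.update_eq_self]
  · intro t ht
    rw [karySize_update k n t x y b m hm]

/-- the set of admissible values for row x -/
lemma card_vals (x : Fin n) :
    ((Finset.univ : Finset (Fin (n + 1))).filter (fun v : Fin (n + 1) => (v : ℕ) ≤ (x : ℕ))).card
      = (x : ℕ) + 1 := by
  rw [← Finset.card_range ((x : ℕ) + 1)]
  refine Finset.card_bij' (fun (v : Fin (n + 1)) _ => (v : ℕ))
    (fun m hm => (⟨m, by simp only [Finset.mem_range] at hm; omega⟩ : Fin (n + 1)))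
    ?_ ?_ ?_ ?_
  · intro v hv
    simp only [Finset.mem_filter, Finset.mem_univ, true_and] at hv
    simp only [Finset.mem_range]; omega
  · intro m hm
    simp only [Finset.mem_filter, Finset.mem_univ, true_and]
    simp only [Finset.mem_range] at hm; omega
  · intro v hv; rfl
  · intro m hm; rfl

lemma fiber_eq (x : Fin n) (y : Fin (k - 1)) (m : ℕ) (hm : m ≤ (x : ℕ))
    (a : Fin (n + 1)) (ha : (a : ℕ) ≤ (x : ℕ)) :
    ∑ t ∈ (V k n).filter (fun t => t x y = a), (karySize k (ext k n t) m : ℚ)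
      = S k n m / ((x : ℕ) + 1) := by
  have hfib := Finset.sum_fiberwise_of_maps_to
    (g := fun t : Fin n → Fin (k - 1) → Fin (n + 1) => t x y)
    (t := (Finset.univ : Finset (Fin (n + 1))).filter (fun v : Fin (n + 1) => (v : ℕ) ≤ (x : ℕ)))
    (f := fun t => (karySize k (ext k n t) m : ℚ))
    (s := V k n)
    (by intro t ht; simp only [Finset.mem_filter, Finset.mem_univ, true_and]
        exact (mem_V k n).1 ht x y)
  have hconst : ∀ v ∈ (Finset.univ : Finset (Fin (n + 1))).filter (fun v : Fin (n + 1) => (v : ℕ) ≤ (x : ℕ)),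
      ∑ t ∈ (V k n).filter (fun t => t x y = v), (karySize k (ext k n t) m : ℚ)
      = ∑ t ∈ (V k n).filter (fun t => t x y = a), (karySize k (ext k n t) m : ℚ) := by
    intro v hv
    simp only [Finset.mem_filter, Finset.mem_univ, true_and] at hv
    exact fiber_const k n x y m hm v a hv ha
  rw [Finset.sum_congr rfl hconst, Finset.sum_const, card_vals n x, nsmul_eq_mul] at hfib
  rw [S, ← hfib]
  push_cast
  field_simp

lemma S_succ (i : ℕ) (hi : i < n) :
    S k n (i + 1) = (n.factorial ^ (k - 1) : ℚ) + S k n i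
      + ((k - 1 : ℕ) : ℚ) * (∑ m ∈ range (i + 1), S k n m) / (i + 1) := by
  have hx : (⟨i, hi⟩ : Fin n) = ⟨i, hi⟩ := rfl
  set x : Fin n := ⟨i, hi⟩ with hxdef
  have step1 : S k n (i + 1)
      = ∑ t ∈ V k n, ((1 : ℚ) + (karySize k (ext k n t) i : ℚ)
          + ∑ j ∈ range (k - 1), (karySize k (ext k n t) (min (ext k n t i j) i) : ℚ)) := by
    unfold S
    refine Finset.sum_congr rfl fun t ht => ?_
    rw [karySize]
    push_cast
    ring
  rw [step1, Finset.sum_add_distrib, Finset.sum_add_distrib, Finset.sum_const, card_V]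
  have hS : ∑ t ∈ V k n, (karySize k (ext k n t) i : ℚ) = S k n i := rfl
  rw [hS]
  congr 1
  · congr 1
    simp
  rw [Finset.sum_comm]
  have hj1 : ∀ j ∈ range (k - 1),
      ∑ t ∈ V k n, (karySize k (ext k n t) (min (ext k n t i j) i) : ℚ)
      = (∑ m ∈ range (i + 1), S k n m) / (i + 1) := by
    intro j hj
    rw [mem_range] at hj
    set y : Fin (k - 1) := ⟨j, hj⟩ with hydef
    have hmin : ∀ t ∈ V k n, min (ext k n t i j) i = ((t x y : ℕ)) := by
      intro t ht
      have h1 : ext k n t i j = (t x y : ℕ) := by unfold ext; rw [dif_pos ⟨hi, hj⟩]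
      have h2 := (mem_V k n).1 ht x y
      rw [h1]
      simp only [hxdef] at h2 ⊢
      omega
    rw [Finset.sum_congr rfl (fun t ht => by rw [hmin t ht])]
    have hfib := Finset.sum_fiberwise_of_maps_to
      (g := fun t : Fin n → Fin (k - 1) → Fin (n + 1) => t x y)
      (t := (Finset.univ : Finset (Fin (n + 1))).filter (fun v : Fin (n + 1) => (v : ℕ) ≤ (x : ℕ)))
      (f := fun t => (karySize k (ext k n t) ((t x y : ℕ)) : ℚ))
      (s := V k n)
      (by intro t ht
          simp only [Finset.mem_filter, Finset.mem_univ, true_and]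
          exact (mem_V k n).1 ht x y)
    rw [← hfib]
    have hfv : ∀ v ∈ (Finset.univ : Finset (Fin (n + 1))).filter
        (fun v : Fin (n + 1) => (v : ℕ) ≤ (x : ℕ)),
        ∑ t ∈ (V k n).filter (fun t => t x y = v), (karySize k (ext k n t) ((t x y : ℕ)) : ℚ)
        = S k n ((v : ℕ)) / (i + 1) := by
      intro v hv
      simp only [Finset.mem_filter, Finset.mem_univ, true_and] at hv
      have h1 : ∀ t ∈ (V k n).filter (fun t => t x y = v),
          (karySize k (ext k n t) ((t x y : ℕ)) : ℚ)
          = (karySize k (ext k n t) ((v : ℕ)) : ℚ) := by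
        intro t ht
        rw [Finset.mem_filter] at ht
        rw [ht.2]
      rw [Finset.sum_congr rfl h1, fiber_eq k n x y (v : ℕ) hv v hv]
    rw [Finset.sum_congr rfl hfv, ← Finset.sum_div]
    congr 1
    refine Finset.sum_bij' (fun (v : Fin (n + 1)) _ => (v : ℕ))
      (fun m hm => (⟨m, by simp only [Finset.mem_range] at hm; have := x.isLt; omega⟩ : Fin (n + 1)))
      ?_ ?_ ?_ ?_ ?_
    · intro v hv
      simp only [Finset.mem_filter, Finset.mem_univ, true_and] at hv
      simp only [Finset.mem_range]
      have hxv : (x : ℕ) = i := rfl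
      omega
    · intro m hm
      simp only [Finset.mem_filter, Finset.mem_univ, true_and]
      simp only [Finset.mem_range] at hm
      have hxv : (x : ℕ) = i := rfl
      omega
    · intro v hv; rfl
    · intro m hm; rfl
    · intro v hv; rfl
  rw [Finset.sum_congr rfl hj1, Finset.sum_const, Finset.card_range, nsmul_eq_mul, mul_div_assoc]


lemma S_eq_A : ∀ m, m ≤ n → S k n m
    = A ((k - 1 : ℕ) : ℚ) m * ((n.factorial : ℚ) ^ (k - 1)) := by
  intro m
  induction m using Nat.strong_induction_on with
  | _ m ih =>
    intro hm
    cases m with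
    | zero =>
      have h0 : ∀ t : Fin n → Fin (k - 1) → Fin (n + 1), karySize k (ext k n t) 0 = 0 :=
        fun t => by rw [karySize]
      simp [S, A_zero, h0]
    | succ i =>
      rw [S_succ k n i (by omega), A_succ]
      rw [ih i (by omega) (by omega)]
      have hsum : ∑ m' ∈ range (i + 1), S k n m'
          = (∑ m' ∈ range (i + 1), A ((k - 1 : ℕ) : ℚ) m') * ((n.factorial : ℚ) ^ (k - 1)) := by
        rw [Finset.sum_mul]
        exact Finset.sum_congr rfl fun m' hm' =>
          ih m' (by simp only [mem_range] at hm'; omega) (by simp only [mem_range] at hm'; omega)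
      rw [hsum]
      push_cast
      ring

end Stmt13aux

/-- for k ≥ 2 and n ≥ 0, the expected decompressed size of a uniformly
random k-ary chain with n internal nodes (the average over the (n!)^{k-1} pointer tables)
equals Σ_{ℓ=1}^{n} ((k-1)^{ℓ-1}/ℓ!)·C(n,ℓ). -/
theorem stmt13 (k n : ℕ) (hk : 2 ≤ k) :
    (∑ t ∈ (Finset.univ : Finset (Fin n → Fin (k - 1) → Fin (n + 1))).filter
        (fun t => ∀ (i : Fin n) (j : Fin (k - 1)), (t i j : ℕ) ≤ (i : ℕ)),
      (karySize k
        (fun i j => if h : i < n ∧ j < k - 1 then (t ⟨i, h.1⟩ ⟨j, h.2⟩ : ℕ) else 0) n : ℚ))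
      / (n.factorial : ℚ) ^ (k - 1)
    = ∑ ℓ ∈ Finset.Icc 1 n, (k - 1 : ℚ) ^ (ℓ - 1) / ℓ.factorial * (n.choose ℓ : ℚ) := by
  have hS : (∑ t ∈ (Finset.univ : Finset (Fin n → Fin (k - 1) → Fin (n + 1))).filter
        (fun t => ∀ (i : Fin n) (j : Fin (k - 1)), (t i j : ℕ) ≤ (i : ℕ)),
      (karySize k
        (fun i j => if h : i < n ∧ j < k - 1 then (t ⟨i, h.1⟩ ⟨j, h.2⟩ : ℕ) else 0) n : ℚ))
      = Stmt13aux.S k n n := rfl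
  rw [hS, Stmt13aux.S_eq_A k n n le_rfl]
  have hfact : ((n.factorial : ℚ) ^ (k - 1)) ≠ 0 := by
    have := n.factorial_pos
    positivity
  rw [mul_div_assoc, div_self hfact, mul_one]
  have hc : ((k - 1 : ℕ) : ℚ) = (k : ℚ) - 1 := by
    have h1 : 1 ≤ k := by omega
    push_cast [Nat.cast_sub h1]
    ring
  rw [Stmt13aux.A, hc]
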